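/- arXiv:0812.2845 — 5 statements merged into one kernel-verified Lean document; each statement's English description precedes it below -/
import Mathlib

section
/- For positive integers n₁,…,n_s and k, the composition of differential operators (φ_{m¹} x^{n₁+l(m¹)}/l(m¹)! · ∂_x^{l(m¹)}) ⋯ (φ_{m^s} x^{n_s+l(m^s)}/l(m^s)! · ∂_x^{l(m^s)}) applied to x^k, summed over tuples m^i with ‖m^i‖ = n_i, equals Σ B_k(m¹,…,m^s) φ_{m¹}⋯φ_{m^s} x^{‖𝐧‖+k}, where B_k(m¹,…,m^s) = C(k, l(m^s)) · ∏_{i=1}^{s-1} C(‖m^{i+1}‖+⋯+‖m^s‖+k, l(m^i)). -/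
open PowerSeries

noncomputable def fcomp (A φ : PowerSeries ℝ) : PowerSeries ℝ :=
  PowerSeries.mk fun N => ∑ k ∈ Finset.range (N + 1), coeff k A * coeff N (φ ^ k)

noncomputable def flog (Φ : PowerSeries ℝ) : PowerSeries ℝ :=
  PowerSeries.mk fun N => ∑ k ∈ Finset.range (N + 1),
    (-1 : ℝ) ^ k * ((k : ℝ) + 1)⁻¹ * coeff N ((Φ - 1) ^ (k + 1))

noncomputable def fexp (f : PowerSeries ℝ) : PowerSeries ℝ :=
  PowerSeries.mk fun N => ∑ k ∈ Finset.range (N + 1),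
    (Nat.factorial k : ℝ)⁻¹ * coeff N (f ^ k)

noncomputable def finteg (g : PowerSeries ℝ) : PowerSeries ℝ :=
  PowerSeries.mk fun N => if N = 0 then 0 else coeff (N - 1) g / (N : ℝ)

noncomputable def gammaCM (n : ℕ) (φ : PowerSeries ℝ) : ℝ :=
  (Nat.factorial n : ℝ) * coeff n (flog (derivativeFun φ))

def splits {α : Type*} : List α → List (List (List α))
  | [] => [[]]
  | a :: l => (splits l).flatMap fun P =>
      match P with
      | [] => [[[a]]]
      | b :: P' => [[a] :: b :: P', (a :: b) :: P']

def Bcoef (k : ℕ) : List (List ℕ) → ℕ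
  | [] => 1
  | [m] => Nat.choose k m.length
  | m :: L => Nat.choose ((L.map List.sum).sum + k) m.length * Bcoef k L

noncomputable def Aval (L : List (List ℕ)) : ℝ :=
  (L.map fun B => ((Nat.factorial B.length : ℝ) * ((B.sum : ℝ) + 1))⁻¹).prod

noncomputable def alphaval (m : ℕ) (l : List ℕ) : ℝ :=
  ((splits l).map fun L => (Nat.choose m L.length : ℝ) * Aval L).sum

noncomputable def Uval (k : ℕ) (m : List ℕ) : ℝ :=
  ((splits m).map fun P => (-1 : ℝ) ^ (P.length + 1) * (Bcoef k P : ℝ)).sum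

noncomputable def betaval : List ℕ → ℝ
  | [] => 0
  | [_] => -1
  | l => ((splits l.dropLast).map fun L =>
      Uval l.getLast! (L.map List.sum) * Aval L).sum

def shuffles2 {α : Type*} : List α → List α → Multiset (List α)
  | [], l => {l}
  | k, [] => {k}
  | a :: k, b :: l =>
      ((shuffles2 k (b :: l)).map (a :: ·)) + ((shuffles2 (a :: k) l).map (b :: ·))
termination_by k l => k.length + l.length

def shc : List ℕ → List ℕ → List ℕ → ℕ
  | [], l, m => if l = m then 1 else 0
  | k, [], m => if k = m then 1 else 0
  | a :: k, b :: l, c :: m =>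
      (if a = c then shc k (b :: l) m else 0) + (if b = c then shc (a :: k) l m else 0)
  | _ :: _, _ :: _, [] => 0
termination_by k l _ => k.length + l.length

def tailProd : List ℕ → ℕ
  | [] => 1
  | a :: l => (a + l.sum) * tailProd l

def tp1 : List ℕ → ℕ
  | [] => 1
  | a :: l => (a + l.sum + 1) * tp1 l

def tpk (k : ℕ) : List ℕ → ℕ
  | [] => 1
  | a :: l => (a + l.sum + k) * tpk k l

def Qm (l : List ℕ) : ℕ := (l.getLast! + 1) * tailProd l.tail

noncomputable def Mval (u : ℕ → ℝ) (l : List ℕ) : ℝ :=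
  ((-1 : ℝ) ^ l.length * (l.map u).prod) / (tailProd l : ℝ)

noncomputable def Bop (n : ℕ) (A : PowerSeries ℝ) : PowerSeries ℝ :=
  X ^ (n + 1) * derivativeFun A


lemma iter_deriv_smul (r : ℝ) (f : PowerSeries ℝ) (l : ℕ) :
    derivativeFun^[l] (r • f) = r • derivativeFun^[l] f := by
  induction l generalizing f with
  | zero => simp
  | succ l ih => rw [Function.iterate_succ_apply, Function.iterate_succ_apply,
      derivativeFun_smul, ih]

lemma deriv_X_pow (m : ℕ) :
    derivativeFun ((X : PowerSeries ℝ) ^ m) = (m : ℝ) • (X : PowerSeries ℝ) ^ (m - 1) := by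
  rw [show derivativeFun ((X : PowerSeries ℝ) ^ m) = derivative ℝ ((X : PowerSeries ℝ) ^ m) from rfl]
  ext N
  simp only [coeff_derivativeFun, coeff_X_pow, PowerSeries.coeff_smul, smul_eq_mul]
  split_ifs with h1 h2 h2
  · subst h2; rw [← h1]; push_cast; ring
  · omega
  · have : m = 0 := by omega
    simp [this]
  · simp

lemma iter_deriv_X_pow (l m : ℕ) :
    derivativeFun^[l] ((X : PowerSeries ℝ) ^ m)
      = (Nat.descFactorial m l : ℝ) • (X : PowerSeries ℝ) ^ (m - l) := by
  induction l generalizing m with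
  | zero => simp
  | succ l ih =>
    rw [Function.iterate_succ_apply, deriv_X_pow, iter_deriv_smul, ih, smul_smul]
    have hexp : m - 1 - l = m - (l + 1) := by omega
    rw [hexp]
    congr 1
    cases m with
    | zero => simp
    | succ m' =>
      rw [Nat.succ_descFactorial_succ]
      push_cast; ring

lemma Bcoef_cons (k : ℕ) (m : List ℕ) (L : List (List ℕ)) :
    Bcoef k (m :: L) = Nat.choose ((L.map List.sum).sum + k) m.length * Bcoef k L := by
  cases L <;> simp [Bcoef]

lemma foldr_key (c : ℕ → ℝ) (k : ℕ) (L : List (List ℕ)) :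
    L.foldr (fun m A => (((m.map c).prod / (Nat.factorial m.length : ℝ)) •
        ((X : PowerSeries ℝ) ^ (m.sum + m.length) * derivativeFun^[m.length] A)))
        ((X : PowerSeries ℝ) ^ k)
      = ((Bcoef k L : ℝ) * (L.map fun m => (m.map c).prod).prod) •
          (X : PowerSeries ℝ) ^ ((L.map List.sum).sum + k) := by
  induction L with
  | nil => simp [Bcoef]
  | cons m L ih =>
    rw [List.foldr_cons, ih, Bcoef_cons]
    set S : ℕ := (L.map List.sum).sum with hS
    set l : ℕ := m.length with hl
    rcases le_or_gt l (S + k) with hle | hlt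
    · rw [iter_deriv_smul, iter_deriv_X_pow, smul_smul, mul_smul_comm, ← pow_add, smul_smul]
      have hexp : m.sum + l + (S + k - l) = (List.map List.sum (m :: L)).sum + k := by
        simp only [List.map_cons, List.sum_cons]; omega
      rw [hexp]
      congr 1
      rw [Nat.descFactorial_eq_factorial_mul_choose]
      have hfac : (Nat.factorial l : ℝ) ≠ 0 := by exact_mod_cast (Nat.factorial_pos l).ne'
      push_cast
      field_simp
      rw [List.map_cons, List.prod_cons]; ring
    · rw [iter_deriv_smul, iter_deriv_X_pow,
        Nat.descFactorial_eq_zero_iff_lt.mpr hlt, Nat.choose_eq_zero_of_lt hlt]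
      simp

/-- Composition of the homogeneous operator components applied to `x^k`. -/
theorem stmt2 (c : ℕ → ℝ) (s : ℕ) (hs : 0 < s) (n : Fin s → ℕ) (hn : ∀ i, 0 < n i)
    (k : ℕ) (hk : 0 < k) :
    ∑ M : (∀ i : Fin s, Composition (n i)),
      ((List.finRange s).foldr
        (fun i A =>
          ((((M i).blocks.map c).prod / (Nat.factorial (M i).length : ℝ)) •
            (X ^ (n i + (M i).length) * derivativeFun^[(M i).length] A)))
        ((X : PowerSeries ℝ) ^ k))
    = ∑ M : (∀ i : Fin s, Composition (n i)),
        ((Bcoef k ((List.finRange s).map fun i => (M i).blocks) : ℝ) *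
          ((List.finRange s).map fun i => ((M i).blocks.map c).prod).prod) •
          (X : PowerSeries ℝ) ^ ((∑ i, n i) + k) := by
  apply Finset.sum_congr rfl
  intro M _
  have hsum : ((((List.finRange s).map fun i => (M i).blocks).map List.sum).sum) = ∑ i, n i := by
    rw [List.map_map, Fin.sum_univ_def]
    congr 1
    apply List.map_congr_left
    intro i _
    exact (M i).blocks_sum
  have key := foldr_key c k ((List.finRange s).map fun i => (M i).blocks)
  rw [List.foldr_map] at key
  refine Eq.trans ?_ (Eq.trans key ?_)
  · congr 1
    funext i A
    rw [(M i).blocks_sum, (M i).blocks_length]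
  · rw [hsum, List.map_map]
    rfl
end

section
/- Let φ, ψ ∈ G₂ with coefficients φ_n, ψ_n and let η = ψ ∘ φ with coefficients η_n. Then for every n ≥ 1, η_n = φ_n + ψ_n + Σ_{k=1}^{n-1} Σ_{𝐧 ∈ 𝒩_k} C(n-k+1, l(𝐧)) φ_𝐧 ψ_{n-k}, where the inner sum is over tuples 𝐧 = (n₁,…,n_s) of positive integers with n₁+⋯+n_s = k. -/
open PowerSeries

lemma comp0_blocks (c : Composition 0) : c.blocks = [] := by
  rcases hb : c.blocks with _ | ⟨a, l⟩
  · rfl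
  · have hp := c.blocks_pos (hb ▸ List.mem_cons_self (a := a) (l := l))
    have hs := c.blocks_sum
    rw [hb] at hs
    simp only [List.sum_cons] at hs
    omega

instance : Unique (Composition 0) where
  default := ⟨[], by simp, rfl⟩
  uniq c := by ext1; rw [comp0_blocks c]

lemma key (u : PowerSeries ℝ) (hu : coeff 0 u = 0) :
    ∀ (j m : ℕ), coeff m (u ^ j) =
      ∑ c ∈ (Finset.univ : Finset (Composition m)).filter (fun c => c.length = j),
        (c.blocks.map fun i => coeff i u).prod := by
  intro j
  induction j with
  | zero =>
    intro m
    rcases Nat.eq_zero_or_pos m with rfl | hm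
    · rw [pow_zero, coeff_zero_eq_constantCoeff, map_one]
      rw [Finset.filter_true_of_mem (fun c _ => by
        simp [Composition.length, comp0_blocks c])]
      rw [Fintype.sum_unique]
      simp [comp0_blocks]
    · rw [pow_zero]
      rw [Finset.filter_false_of_mem, Finset.sum_empty]
      · simp [PowerSeries.coeff_one, hm.ne']
      · intro c _ hc
        have := c.blocks_sum
        have : c.blocks = [] := List.length_eq_zero_iff.mp hc
        simp [this] at *
        omega
  | succ j ih =>
    intro m
    rw [pow_succ', coeff_mul]
    simp_rw [ih, Finset.mul_sum]
    rw [← Finset.sum_filter_of_ne (p := fun p : ℕ × ℕ => p.1 ≠ 0)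
      (by
        intro x _ hx h0
        apply hx
        apply Finset.sum_eq_zero
        intro c _
        rw [h0, hu, zero_mul])]
    rw [Finset.sum_sigma']
    refine Finset.sum_bij'
      (fun x hx => (⟨x.1.1 :: x.2.blocks, ?_, ?_⟩ : Composition m))
      (fun c hc => ⟨(c.blocks.headI, c.blocks.tail.sum),
        ⟨c.blocks.tail, fun hi => c.blocks_pos (List.mem_of_mem_tail hi), rfl⟩⟩)
      ?_ ?_ ?_ ?_ ?_
    · simp only [Finset.mem_sigma, Finset.mem_filter, Finset.mem_antidiagonal] at hx
      intro i hi
      rcases List.mem_cons.mp hi with rfl | hi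
      · exact Nat.pos_of_ne_zero hx.1.2
      · exact x.2.blocks_pos hi
    · simp only [Finset.mem_sigma, Finset.mem_filter, Finset.mem_antidiagonal] at hx
      simp [List.sum_cons, x.snd.blocks_sum, Finset.HasAntidiagonal.mem_antidiagonal.mp hx.1.1]
    · intro a ha
      simp only [Finset.mem_sigma, Finset.mem_filter, Finset.mem_antidiagonal,
        Finset.mem_univ, true_and] at ha ⊢
      simp [Composition.length, ha.2]
    · intro a ha
      simp only [Finset.mem_filter, Finset.mem_univ, true_and] at ha
      have hne : a.blocks ≠ [] := by
        intro h
        rw [Composition.length, h] at ha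
        simp at ha
      obtain ⟨b, l, hb⟩ := List.exists_cons_of_ne_nil hne
      simp only [Finset.mem_sigma, Finset.mem_filter, Finset.mem_antidiagonal,
        Finset.mem_univ, true_and]
      refine ⟨⟨?_, ?_⟩, ?_⟩
      · rw [Finset.HasAntidiagonal.mem_antidiagonal]
        show a.blocks.headI + a.blocks.tail.sum = m
        rw [List.headI_add_tail_sum, a.blocks_sum]
      · rw [hb]
        simp only [List.headI_cons]
        exact (a.blocks_pos (hb ▸ List.mem_cons_self (a := b) (l := l))).ne'
      · show a.blocks.tail.length = j
        have := ha
        rw [Composition.length] at this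
        rw [List.length_tail, this]
        omega
    · rintro ⟨⟨p, q⟩, ⟨bs, pos, hsum⟩⟩ -
      dsimp only at hsum ⊢
      subst hsum
      rfl
    · intro a ha
      simp only [Finset.mem_filter, Finset.mem_univ, true_and] at ha
      have hne : a.blocks ≠ [] := by
        intro h
        rw [Composition.length, h] at ha
        simp at ha
      ext1
      obtain ⟨b, l, hb⟩ := List.exists_cons_of_ne_nil hne
      simp [hb]
    · intro a ha
      simp

lemma lemma2 (φ : PowerSeries ℝ) (h0 : coeff 0 φ = 0) (h1 : coeff 1 φ = 1) (m k : ℕ) :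
    coeff (m + k) (φ ^ k) = ∑ c : Composition m,
      (Nat.choose k c.length : ℝ) * (c.blocks.map fun i => coeff (i + 1) φ).prod := by
  set u : PowerSeries ℝ := PowerSeries.mk fun i => if i = 0 then 0 else coeff (i + 1) φ
    with hudef
  have hu0 : coeff 0 u = 0 := by simp [hudef]
  have hφ : φ = X * (1 + u) := by
    ext N
    cases N with
    | zero => simp [PowerSeries.coeff_zero_eq_constantCoeff, map_mul, h0]
    | succ N =>
      rw [coeff_succ_X_mul, map_add, PowerSeries.coeff_one, hudef, coeff_mk]
      cases N with
      | zero => simp [h1]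
      | succ N => simp
  conv_lhs => rw [hφ, mul_pow]
  rw [coeff_X_pow_mul]
  have hb : (1 + u) ^ k =
      ∑ j ∈ Finset.range (k + 1), u ^ j * (1 : ℝ⟦X⟧) ^ (k - j) * (C (k.choose j : ℝ)) := by
    rw [add_comm (1 : ℝ⟦X⟧) u, add_pow]
    refine Finset.sum_congr rfl fun j _ => ?_
    norm_cast
  rw [hb, map_sum]
  simp only [one_pow, mul_one, coeff_mul_C]
  simp only [key u hu0]
  -- now: ∑ j ∈ range (k+1), (∑ c ∈ filter (len = j), prod) * C(k,j) = ∑ c, C(k,len) * prod'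
  have hcb : ∀ c : Composition m,
      (c.blocks.map fun i => coeff i u).prod
        = (c.blocks.map fun i => coeff (i + 1) φ).prod := by
    intro c
    congr 1
    refine List.map_congr_left fun i hi => ?_
    rw [hudef, coeff_mk, if_neg (c.blocks_pos hi).ne']
  simp only [Finset.sum_filter, Finset.sum_mul]
  rw [Finset.sum_comm]
  refine Finset.sum_congr rfl fun c _ => ?_
  rw [hcb]
  have : ∀ j ∈ Finset.range (k + 1),
      (if c.length = j then (c.blocks.map fun i => coeff (i + 1) φ).prod else 0)
          * (k.choose j : ℝ)
        = if c.length = j then (k.choose c.length : ℝ)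
            * (c.blocks.map fun i => coeff (i + 1) φ).prod else 0 := by
    intro j _
    split_ifs with h
    · rw [h, mul_comm]
    · rw [zero_mul]
  rw [Finset.sum_congr rfl this, Finset.sum_ite_eq]
  split_ifs with h
  · rfl
  · rw [Finset.mem_range, not_lt] at h
    rw [Nat.choose_eq_zero_of_lt (by omega), Nat.cast_zero, zero_mul]

/-- Coproduct of the Faà di Bruno coordinate: coefficients of `η = ψ ∘ φ`. -/
theorem stmt3 (φ ψ η : PowerSeries ℝ)
    (hφ0 : coeff 0 φ = 0) (hφ1 : coeff 1 φ = 1)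
    (hψ0 : coeff 0 ψ = 0) (hψ1 : coeff 1 ψ = 1)
    (hη : η = fcomp ψ φ) (n : ℕ) (hn : 1 ≤ n) :
    coeff (n + 1) η = coeff (n + 1) φ + coeff (n + 1) ψ +
      ∑ k ∈ Finset.Icc 1 (n - 1), ∑ c : Composition k,
        (Nat.choose (n - k + 1) c.length : ℝ) *
          (c.blocks.map fun i => coeff (i + 1) φ).prod *
          coeff (n - k + 1) ψ := by
  
  subst hη
  obtain ⟨p, rfl⟩ : ∃ p, n = p + 1 := ⟨n - 1, by omega⟩
  simp only [fcomp, coeff_mk]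
  have hlast : coeff (p + 1 + 1) (φ ^ (p + 2)) = 1 := by
    have h := lemma2 φ hφ0 hφ1 0 (p + 2)
    rw [zero_add] at h
    rw [show p + 1 + 1 = p + 2 from rfl, h, Fintype.sum_unique]
    show ((p + 2).choose (List.length []) : ℝ) * (List.map _ []).prod = 1
    simp
  have hmid : ∑ i ∈ Finset.range p,
        coeff (i + 2) ψ * coeff (p + 1 + 1) (φ ^ (i + 2))
      = ∑ k ∈ Finset.Icc 1 (p + 1 - 1), ∑ c : Composition k,
          ((p + 1 - k + 1).choose c.length : ℝ) *
            (c.blocks.map fun i => coeff (i + 1) φ).prod *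
            coeff (p + 1 - k + 1) ψ := by
    rw [show p + 1 - 1 = p from rfl, ← Finset.Ico_add_one_right_eq_Icc, Finset.sum_Ico_eq_sum_range]
    rw [← Finset.sum_range_reflect]
    refine Finset.sum_congr rfl fun i hi => ?_
    rw [Finset.mem_range] at hi
    rw [show p - 1 - i + 2 = p + 1 - (1 + i) + 1 by omega]
    rw [show p + 1 + 1 = (1 + i) + (p + 1 - (1 + i) + 1) by omega]
    rw [lemma2 φ hφ0 hφ1, mul_comm, Finset.sum_mul]
  rw [Finset.sum_range_succ, Finset.sum_range_succ', Finset.sum_range_succ']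
  rw [hψ0, zero_mul, hψ1, pow_one, hmid, hlast]
  simp only [show p + 2 = p + 1 + 1 from rfl]
  ring
end

section
/- The mould M^{n₁,…,n_s} = (-1)^s u_{n₁}⋯u_{n_s}/((n₁+⋯+n_s)(n₂+⋯+n_s)⋯n_s) is symmetral: M^∅ = 1 and for any two nonempty tuples 𝐤, 𝐥 of positive integers, M^𝐤 · M^𝐥 = Σ_𝐦 sh(𝐤,𝐥; 𝐦) M^𝐦, where sh(𝐤,𝐥; 𝐦) is the number of shuffles of 𝐤 and 𝐥 yielding 𝐦. -/
open PowerSeries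

lemma Mval_cons (u : ℕ → ℝ) (a : ℕ) (m : List ℕ) :
    Mval u (a :: m) = (-(u a) / (((a : ℝ) + (m.sum : ℝ)))) * Mval u m := by
  simp only [Mval, tailProd, List.length_cons, List.map_cons, List.prod_cons, pow_succ]
  push_cast
  rw [div_eq_mul_inv, div_eq_mul_inv, div_eq_mul_inv, mul_inv]
  ring

lemma shuffles2_sum : ∀ (k l m : List ℕ), m ∈ shuffles2 k l → m.sum = k.sum + l.sum := by
  intro k l
  induction k, l using shuffles2.induct with
  | case1 l => intro m hm; simp [shuffles2] at hm; simp [hm]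
  | case2 a k => intro m hm; simp [shuffles2] at hm; simp [hm]
  | case3 a k b l ih1 ih2 =>
    intro m hm
    rw [shuffles2] at hm
    simp only [Multiset.mem_add, Multiset.mem_map] at hm
    rcases hm with ⟨x, hx, rfl⟩ | ⟨x, hx, rfl⟩
    · have := ih1 x hx; simp [this]; ring
    · have := ih2 x hx; simp [this]; ring

lemma key12 (u : ℕ → ℝ) : ∀ k l : List ℕ, (∀ i ∈ k, 0 < i) → (∀ i ∈ l, 0 < i) →
    Mval u k * Mval u l = ((shuffles2 k l).map (Mval u)).sum := by
  intro k l
  induction k, l using shuffles2.induct with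
  | case1 l => intro _ _; simp [shuffles2, Mval, tailProd]
  | case2 a k => intro _ _; simp [shuffles2, Mval, tailProd]
  | case3 a k b l ih1 ih2 =>
    intro hk hl
    have hk' : ∀ i ∈ k, 0 < i := fun i hi => hk i (List.mem_cons_of_mem _ hi)
    have hl' : ∀ i ∈ l, 0 < i := fun i hi => hl i (List.mem_cons_of_mem _ hi)
    set x : ℝ := (a : ℝ) + (k.sum : ℝ) with hx
    set y : ℝ := (b : ℝ) + (l.sum : ℝ) with hy
    have hxpos : 0 < x := by
      have : 0 < a := hk a List.mem_cons_self
      rw [hx]; positivity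
    have hypos : 0 < y := by
      have : 0 < b := hl b List.mem_cons_self
      rw [hy]; positivity
    have e1 : ((shuffles2 k (b :: l)).map fun m => Mval u (a :: m)) =
        (shuffles2 k (b :: l)).map fun m => (-(u a) / (x + y)) * Mval u m := by
      refine Multiset.map_congr rfl fun m hm => ?_
      rw [Mval_cons, shuffles2_sum k (b :: l) m hm]
      simp only [List.sum_cons, Nat.cast_add]
      rw [hx, hy]; ring
    have e2 : ((shuffles2 (a :: k) l).map fun m => Mval u (b :: m)) =
        (shuffles2 (a :: k) l).map fun m => (-(u b) / (x + y)) * Mval u m := by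
      refine Multiset.map_congr rfl fun m hm => ?_
      rw [Mval_cons, shuffles2_sum (a :: k) l m hm]
      simp only [List.sum_cons, Nat.cast_add]
      rw [hx, hy]; ring
    rw [shuffles2, Multiset.map_add, Multiset.sum_add, Multiset.map_map, Multiset.map_map]
    simp only [Function.comp]
    rw [e1, e2, Multiset.sum_map_mul_left, Multiset.sum_map_mul_left,
      ← ih1 hk' hl, ← ih2 hk hl']
    rw [Mval_cons u a k, Mval_cons u b l, ← hx, ← hy]
    have hx0 : x ≠ 0 := ne_of_gt hxpos
    have hy0 : y ≠ 0 := ne_of_gt hypos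
    have hxy0 : x + y ≠ 0 := by positivity
    field_simp

/-- The mould `M` is symmetral: `M^∅ = 1` and `M^𝐤 M^𝐥 = Σ_𝐦 sh(𝐤,𝐥;𝐦) M^𝐦`. -/
theorem stmt12 (u : ℕ → ℝ) :
    Mval u [] = 1 ∧
    ∀ k l : List ℕ, k ≠ [] → l ≠ [] → (∀ i ∈ k, 0 < i) → (∀ i ∈ l, 0 < i) →
      Mval u k * Mval u l = ((shuffles2 k l).map (Mval u)).sum := by
  refine ⟨by simp [Mval, tailProd], fun k l _ _ hk hl => key12 u k l hk hl⟩
end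

section
/- Define S^{n₁,…,n_s} = ∏_{i=1}^s (n_i+n_{i+1}+⋯+n_s+1) and Q^{n₁,…,n_s} = (n_s+1)·∏_{i=2}^s (n_i+⋯+n_s), with Q^{n₁} = n₁+1. Then for every nonempty tuple 𝐦 of positive integers: Σ_{t=1}^{l(𝐦)} ((-1)^{t-1}/t) Σ_{𝐧¹,…,𝐧^t} sh(𝐧¹,…,𝐧^t; 𝐦) S^{𝐧¹}⋯S^{𝐧^t} = Q^𝐦, where the inner sum is over t-tuples of nonempty tuples and sh(𝐧¹,…,𝐧^t; 𝐦) counts the shuffles of 𝐧¹,…,𝐧^t equal to 𝐦. -/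
open PowerSeries

open Finset

def blkCM (l : List ℕ) {t : ℕ} (f : Fin l.length → Fin t) (i : Fin t) : List ℕ :=
  ((List.finRange l.length).filter fun j => f j = i).map l.get

noncomputable def WtCM (l : List ℕ) {t : ℕ} (f : Fin l.length → Fin t) : ℝ :=
  ∏ i : Fin t, (tp1 (blkCM l f i) : ℝ)

open Classical in
noncomputable def StCM (l : List ℕ) (t : ℕ) : ℝ :=
  ∑ f ∈ Finset.univ.filter (fun f : Fin l.length → Fin t => Function.Surjective f), WtCM l f

noncomputable def TtCM (l : List ℕ) : ℝ :=
  ∑ t ∈ Finset.Icc 1 l.length, ((-1:ℝ)^(t+1) / (t:ℝ)) * StCM l t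

lemma blk_cons (a : ℕ) (l : List ℕ) {t : ℕ} (i : Fin t) (g : Fin l.length → Fin t) (i' : Fin t) :
    blkCM (a :: l) (Fin.cons i g) i' = (if i = i' then [a] else []) ++ blkCM l g i' := by
  have h1 : List.finRange (a :: l).length
      = (0 : Fin (l.length+1)) :: (List.finRange l.length).map Fin.succ := List.finRange_succ (n := l.length)
  unfold blkCM
  rw [h1, List.filter_cons, List.filter_map]
  have h2 : (List.finRange l.length).filter ((fun j : Fin (l.length+1) => decide ((Fin.cons i g : Fin (l.length+1) → Fin t) j = i')) ∘ Fin.succ)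
      = (List.finRange l.length).filter (fun j => decide (g j = i')) := by
    apply List.filter_congr; intro x _; simp [Fin.cons_succ]
  have h3 : ∀ L : List (Fin l.length), List.map (a::l).get (L.map Fin.succ) = L.map l.get := by
    intro L; rw [List.map_map]; apply List.map_congr_left; intro x _; simp
  by_cases h : i = i'
  · subst h; simp [Fin.cons_zero, h2, h3]
  · simp [Fin.cons_zero, h, Ne.symm h, h2, h3]

lemma tp1_nil : tp1 [] = 1 := rfl
lemma tp1_cons (a : ℕ) (l : List ℕ) : tp1 (a :: l) = (a + l.sum + 1) * tp1 l := rfl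

lemma sum_filter_map_list {n t : ℕ} (g : Fin n → Fin t) (f : Fin n → ℕ) (L : List (Fin n)) :
    ∑ i : Fin t, ((L.filter fun j => g j = i).map f).sum = (L.map f).sum := by
  induction L with
  | nil => simp
  | cons x L ih =>
    simp only [List.filter_cons, List.map_cons, List.sum_cons]
    have hpt : ∀ i : Fin t,
        (List.map f (if decide (g x = i) = true then x :: List.filter (fun j => decide (g j = i)) L
          else List.filter (fun j => decide (g j = i)) L)).sum
        = (if g x = i then f x else 0) + (List.map f (List.filter (fun j => decide (g j = i)) L)).sum := by
      intro i; by_cases h : g x = i <;> simp [h]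
    rw [Finset.sum_congr rfl fun i _ => hpt i, Finset.sum_add_distrib, ih]
    simp [Finset.sum_ite_eq]

lemma sum_blk (l : List ℕ) {t : ℕ} (g : Fin l.length → Fin t) :
    ∑ i : Fin t, ((blkCM l g i).sum : ℝ) = (l.sum : ℝ) := by
  unfold blkCM
  rw [← Nat.cast_sum]
  rw [sum_filter_map_list g l.get (List.finRange l.length), List.map_get_finRange]

lemma Wt_cons (a : ℕ) (l : List ℕ) {t : ℕ} (i : Fin t) (g : Fin l.length → Fin t) :
    WtCM (a :: l) (Fin.cons i g) = ((a : ℝ) + ((blkCM l g i).sum : ℝ) + 1) * WtCM l g := by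
  unfold WtCM
  have hpt : ∀ i' : Fin t, (tp1 (blkCM (a :: l) (Fin.cons i g) i') : ℝ)
      = (if i' = i then ((a : ℝ) + ((blkCM l g i).sum : ℝ) + 1) else 1) * (tp1 (blkCM l g i') : ℝ) := by
    intro i'
    rw [blk_cons]
    by_cases h : i = i'
    · subst h
      rw [if_pos rfl, List.singleton_append, tp1_cons, Nat.cast_mul, Nat.cast_add, Nat.cast_add,
        Nat.cast_one, if_pos rfl]
    · simp [h, Ne.symm h]
  rw [Finset.prod_congr rfl fun i' _ => hpt i', Finset.prod_mul_distrib, Finset.prod_ite_eq' Finset.univ i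
    (fun _ => ((a : ℝ) + ((blkCM l g i).sum : ℝ) + 1))]
  simp

lemma surj_cons_of_surj {n t : ℕ} (i : Fin t) (g : Fin n → Fin t) (hg : Function.Surjective g) :
    Function.Surjective (Fin.cons i g : Fin (n+1) → Fin t) := by
  intro y
  obtain ⟨x, hx⟩ := hg y
  exact ⟨x.succ, by simpa using hx⟩

lemma g_ne_of_cons {n t : ℕ} {i : Fin t} {g : Fin n → Fin t}
    (hc : Function.Surjective (Fin.cons i g : Fin (n+1) → Fin t))
    (hg : ¬ Function.Surjective g) : ∀ x, g x ≠ i := by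
  intro x hx
  apply hg
  intro y
  obtain ⟨p, hp⟩ := hc y
  cases p using Fin.cases with
  | zero => exact ⟨x, hx.trans (by simpa using hp)⟩
  | succ q => exact ⟨q, by simpa using hp⟩

lemma blk_empty {l : List ℕ} {t : ℕ} {g : Fin l.length → Fin t} {i : Fin t}
    (h : ∀ x, g x ≠ i) : blkCM l g i = [] := by
  unfold blkCM
  rw [List.filter_eq_nil_iff.mpr (by intro x _; simpa using h x)]
  rfl

lemma Wt_relabel (l : List ℕ) {t : ℕ} (i : Fin (t+1)) (h : Fin l.length → Fin t) :
    WtCM l (fun x => i.succAbove (h x)) = WtCM l h := by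
  unfold WtCM
  rw [Fin.prod_univ_succAbove (fun j => (tp1 (blkCM l (fun x => i.succAbove (h x)) j) : ℝ)) i]
  have h1 : blkCM l (fun x => i.succAbove (h x)) i = [] :=
    blk_empty (fun x => Fin.succAbove_ne i (h x))
  have h2 : ∀ j : Fin t, blkCM l (fun x => i.succAbove (h x)) (i.succAbove j) = blkCM l h j := by
    intro j
    unfold blkCM
    congr 1
    apply List.filter_congr
    intro x _
    simp [Fin.succAbove_right_injective.eq_iff]
  rw [h1]
  simp only [tp1_nil, Nat.cast_one, one_mul]
  exact Finset.prod_congr rfl fun j _ => by rw [h2 j]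

open Classical in
lemma sum_miss (l : List ℕ) (t : ℕ) (i : Fin (t+1)) :
    ∑ g : Fin l.length → Fin (t+1),
      (if ¬ Function.Surjective g ∧ Function.Surjective (Fin.cons i g : Fin (l.length+1) → Fin (t+1))
        then WtCM l g else 0)
    = StCM l t := by
  classical
  rw [← Finset.sum_filter, StCM]
  symm
  apply Finset.sum_nbij (fun h => fun x => i.succAbove (h x))
  · intro h hh
    simp only [Finset.mem_filter, Finset.mem_univ, true_and] at hh ⊢
    refine ⟨fun hs => ?_, fun y => ?_⟩
    · obtain ⟨x, hx⟩ := hs i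
      exact Fin.succAbove_ne i (h x) hx
    · by_cases hy : y = i
      · refine ⟨0, ?_⟩
        simp [hy]
      · obtain ⟨j, hj⟩ := Fin.exists_succAbove_eq (Ne.symm (Ne.symm hy))
        obtain ⟨x, hx⟩ := hh j
        refine ⟨x.succ, ?_⟩
        simp [Fin.cons_succ, hx, hj]
  · intro h1 _ h2 _ heq
    funext x
    exact Fin.succAbove_right_injective (congrFun heq x)
  · intro g hg
    simp only [Finset.coe_filter, Finset.mem_univ, true_and, Set.mem_setOf_eq] at hg
    obtain ⟨hns, hcs⟩ := hg
    have hne := g_ne_of_cons hcs hns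
    choose hfun hspec using fun x => Fin.exists_succAbove_eq (hne x)
    refine ⟨hfun, ?_, funext fun x => hspec x⟩
    simp only [Finset.coe_filter, Finset.mem_univ, true_and, Set.mem_setOf_eq]
    intro j
    obtain ⟨p, hp⟩ := hcs (i.succAbove j)
    cases p using Fin.cases with
    | zero =>
      rw [Fin.cons_zero] at hp
      exact absurd hp.symm (Fin.succAbove_ne i j)
    | succ q =>
      rw [Fin.cons_succ] at hp
      refine ⟨q, Fin.succAbove_right_injective (p := i) ?_⟩
      rw [hspec q, hp]
  · intro h _
    exact (Wt_relabel l i h).symm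

open Classical in
lemma St_rec (a : ℕ) (l : List ℕ) (t : ℕ) :
    StCM (a :: l) (t+1)
      = (((t:ℝ)+1) * ((a:ℝ)+1) + (l.sum:ℝ)) * StCM l (t+1)
        + ((a:ℝ)+1) * ((t:ℝ)+1) * StCM l t := by
  classical
  have e0 : (∑ f : Fin (a :: l).length → Fin (t+1),
        if Function.Surjective f then WtCM (a :: l) f else 0)
      = ∑ p : Fin (t+1) × (Fin l.length → Fin (t+1)),
          (if Function.Surjective (Fin.cons p.1 p.2 : Fin (l.length+1) → Fin (t+1))
            then WtCM (a :: l) (Fin.cons p.1 p.2) else 0) :=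
    (Equiv.sum_comp (Fin.consEquiv (fun _ : Fin (l.length+1) => Fin (t+1)))
      (fun f => if Function.Surjective f then WtCM (a :: l) f else 0)).symm
  have e1 : StCM (a :: l) (t+1)
      = ∑ i : Fin (t+1), ∑ g : Fin l.length → Fin (t+1),
          (if Function.Surjective (Fin.cons i g : Fin (l.length+1) → Fin (t+1))
            then WtCM (a :: l) (Fin.cons i g) else 0) := by
    rw [StCM, Finset.sum_filter, e0, Fintype.sum_prod_type]
  have point : ∀ (i : Fin (t+1)) (g : Fin l.length → Fin (t+1)),
      (if Function.Surjective (Fin.cons i g : Fin (l.length+1) → Fin (t+1))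
        then WtCM (a :: l) (Fin.cons i g) else 0)
      = (if Function.Surjective g then ((a:ℝ) + ((blkCM l g i).sum:ℝ) + 1) * WtCM l g else 0)
        + ((a:ℝ)+1) * (if ¬ Function.Surjective g ∧
              Function.Surjective (Fin.cons i g : Fin (l.length+1) → Fin (t+1))
            then WtCM l g else 0) := by
    intro i g
    by_cases hg : Function.Surjective g
    · rw [if_pos (surj_cons_of_surj i g hg), if_pos hg, if_neg (by simp [hg]), mul_zero,
        add_zero, Wt_cons]
    · rw [if_neg hg, zero_add]
      by_cases hc : Function.Surjective (Fin.cons i g : Fin (l.length+1) → Fin (t+1))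
      · rw [if_pos hc, if_pos ⟨hg, hc⟩, Wt_cons, blk_empty (g_ne_of_cons hc hg)]
        simp
      · rw [if_neg hc, if_neg (by tauto), mul_zero]
  rw [e1]
  simp only [point, Finset.sum_add_distrib]
  congr 1
  · -- part A
    rw [Finset.sum_comm]
    have hA : ∀ g : Fin l.length → Fin (t+1),
        ∑ i : Fin (t+1),
          (if Function.Surjective g then ((a:ℝ) + ((blkCM l g i).sum:ℝ) + 1) * WtCM l g else 0)
        = (if Function.Surjective g
            then ((((t:ℝ)+1) * ((a:ℝ)+1) + (l.sum:ℝ)) * WtCM l g) else 0) := by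
      intro g
      by_cases hg : Function.Surjective g
      · simp only [if_pos hg, ← Finset.sum_mul]
        congr 1
        rw [Finset.sum_add_distrib, Finset.sum_add_distrib, sum_blk]
        simp only [Finset.sum_const, Finset.card_univ, Fintype.card_fin, nsmul_eq_mul,
          mul_one]
        push_cast
        ring
      · simp [hg]
    rw [Finset.sum_congr rfl fun g _ => hA g]
    rw [StCM, Finset.sum_filter, Finset.mul_sum]
    exact Finset.sum_congr rfl fun g _ => by by_cases hg : Function.Surjective g <;> simp [hg]
  · -- part B
    simp only [← Finset.mul_sum]
    rw [Finset.sum_congr rfl fun i _ => sum_miss l t i]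
    simp only [Finset.sum_const, Finset.card_univ, Fintype.card_fin, nsmul_eq_mul]
    push_cast
    ring

lemma St_zero_of_lt (l : List ℕ) {t : ℕ} (h : l.length < t) : StCM l t = 0 := by
  classical
  rw [StCM]
  apply Finset.sum_eq_zero
  intro f hf
  simp only [Finset.mem_filter] at hf
  have h2 := Fintype.card_le_of_surjective f hf.2
  simp only [Fintype.card_fin] at h2
  omega

lemma St_zero0 (l : List ℕ) (h : l ≠ []) : StCM l 0 = 0 := by
  classical
  rw [StCM]
  apply Finset.sum_eq_zero
  intro f _
  exact (f ⟨0, List.length_pos_iff.mpr h⟩).elim0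

lemma St_base (a : ℕ) : StCM [a] 1 = (a:ℝ) + 1 := by
  rw [StCM]
  rw [Finset.sum_eq_single_of_mem (fun _ => (0 : Fin 1))
    (Finset.mem_filter.mpr ⟨Finset.mem_univ _, fun y => ⟨⟨0, by simp⟩, Subsingleton.elim _ _⟩⟩)
    (fun b _ hb => absurd (Subsingleton.elim b _) hb)]
  rw [WtCM, Fin.prod_univ_one]
  have h2 : blkCM [a] (fun _ : Fin [a].length => (0:Fin 1)) (0 : Fin 1) = [a] := by
    unfold blkCM
    rw [show List.finRange (List.length [a]) = [(0 : Fin 1)] from rfl]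
    simp
  rw [h2, tp1_cons, tp1_nil]
  push_cast
  simp

lemma Tt_rec (a : ℕ) (l : List ℕ) (hl : l ≠ []) :
    TtCM (a :: l) = (l.sum : ℝ) * TtCM l := by
  classical
  have key : ∀ (F : ℕ → ℝ) (N : ℕ),
      (∑ t ∈ Finset.Icc 1 N, ((-1:ℝ)^(t+1)/(t:ℝ)) * F t)
      = ∑ i ∈ Finset.range N, (((-1:ℝ)^i/((i:ℝ)+1)) * F (i+1)) := by
    intro F N
    rw [← Finset.Ico_add_one_right_eq_Icc, Finset.sum_Ico_eq_sum_range]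
    refine Finset.sum_congr (by norm_num) fun i _ => ?_
    rw [show 1 + i = i + 1 from Nat.add_comm 1 i]
    push_cast
    ring_nf
  rw [TtCM, TtCM, key (StCM (a :: l)) ((a :: l).length), key (StCM l) l.length,
    show (a :: l).length = l.length + 1 from rfl]
  have step : ∀ i ∈ Finset.range (l.length+1), (((-1:ℝ)^i/((i:ℝ)+1)) * StCM (a::l) (i+1))
      = (l.sum:ℝ) * (((-1:ℝ)^i/((i:ℝ)+1)) * StCM l (i+1))
        + ((a:ℝ)+1) * (((-1:ℝ)^(i+1+1) * StCM l (i+1)) - ((-1:ℝ)^(i+1) * StCM l i)) := by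
    intro i _
    rw [St_rec a l i]
    have h1 : ((i:ℝ)+1) ≠ 0 := by positivity
    field_simp
    ring
  rw [Finset.sum_congr rfl step, Finset.sum_add_distrib, ← Finset.mul_sum, ← Finset.mul_sum,
    Finset.sum_range_sub (fun i => (-1:ℝ)^(i+1) * StCM l i),
    Finset.sum_range_succ]
  rw [St_zero_of_lt l (by omega), St_zero0 l hl]
  ring

lemma Tt_base (a : ℕ) : TtCM [a] = (a:ℝ) + 1 := by
  rw [TtCM, show List.length [a] = 1 from rfl, Finset.Icc_self, Finset.sum_singleton, St_base]
  norm_num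

lemma Qm_cons (a : ℕ) (l : List ℕ) (hl : l ≠ []) : Qm (a :: l) = l.sum * Qm l := by
  obtain ⟨b, l', rfl⟩ := List.exists_cons_of_ne_nil hl
  show (List.getLast! (a :: b :: l') + 1) * tailProd (b :: l') = _
  rw [show List.getLast! (a :: b :: l') = List.getLast! (b :: l') by
    rw [List.getLast!_cons_eq_getLastD, List.getLast!_cons_eq_getLastD, List.getLastD_cons]]
  show _ = (b :: l').sum * ((List.getLast! (b :: l') + 1) * tailProd l')
  rw [show tailProd (b :: l') = (b + l'.sum) * tailProd l' from rfl, List.sum_cons]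
  ring

theorem keyCM : ∀ (l : List ℕ), l ≠ [] → TtCM l = (Qm l : ℝ) := by
  intro l
  induction l with
  | nil => intro h; exact absurd rfl h
  | cons a l ih =>
    intro _
    rcases eq_or_ne l [] with rfl | hl
    · rw [Tt_base]
      show _ = ((Qm [a] : ℕ) : ℝ)
      rw [show Qm [a] = a + 1 from by simp [Qm, tailProd, List.getLast!_cons_eq_getLastD]]
      push_cast
      ring
    · rw [Tt_rec a l hl, ih hl, Qm_cons a l hl]
      push_cast
      ring

open Classical in
/-- `Σ_t ((-1)^{t-1}/t) Σ sh(𝐧¹,…,𝐧^t;𝐦) S^{𝐧¹}⋯S^{𝐧^t} = Q^𝐦`, where the inner sum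
over `t`-tuples of nonempty tuples shuffling to `𝐦` is realized by surjections
`f : Fin (l 𝐦) → Fin t`, whose fibers (in order) give the blocks `𝐧^i`. -/
theorem stmt15 (m : List ℕ) (hne : m ≠ []) (hm : ∀ i ∈ m, 0 < i) :
    ∑ t ∈ Finset.Icc 1 m.length, ((-1 : ℝ) ^ (t + 1) / (t : ℝ)) *
      ∑ f ∈ Finset.univ.filter (fun f : Fin m.length → Fin t => Function.Surjective f),
        ∏ i : Fin t,
          (tp1 (((List.finRange m.length).filter fun j => f j = i).map m.get) : ℝ)
    = (Qm m : ℝ) := by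
  exact keyCM m hne
end

section
/- Define α^𝐧_k = Σ_{t=1}^{l(𝐧)} C(k,t) Σ_{𝐧¹⋯𝐧^t=𝐧} A(𝐧¹,…,𝐧^t) with A as above. For 𝐧 = (n₁,…,n_s) and positive integers k, p₁, set V^{n₁,…,n_s}_{k,p₁} = Σ_{i=1}^s n_i α^{n₁,…,n_i+p₁,…,n_s}_k + (p₁+1) Σ_{i=0}^s α^{n₁,…,n_i,p₁,n_{i+1},…,n_s}_k. Then V^{n₁,…,n_s}_{k,p₁} = (n₁+⋯+n_s+k) α^{n₁,…,n_s}_k. -/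
open PowerSeries

/-! ### Auxiliary machinery for `stmt17` -/

noncomputable def Phig (g : ℕ → ℕ → ℕ → ℝ) (l : List ℕ) : ℝ :=
  ((splits l).map fun L => g L.tail.length L.head!.length L.head!.sum * Aval L.tail).sum

noncomputable def Dw (a : ℕ) (g : ℕ → ℕ → ℕ → ℝ) : ℕ → ℕ → ℕ → ℝ :=
  fun t hl hs => g (t+1) 1 a * ((Nat.factorial hl : ℝ) * ((hs : ℝ)+1))⁻¹ + g t (hl+1) (a+hs)

noncomputable def Ghat (S : ℝ) (p : ℕ) (g : ℕ → ℕ → ℕ → ℝ) : ℕ → ℕ → ℕ → ℝ :=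
  fun t hl hs => (hs : ℝ) * g t hl (hs+p)
    + ((p:ℝ)+1) * ((hl:ℝ)+1) * g t (hl+1) (hs+p)
    + (S - (hs:ℝ) + (t:ℝ)) * g t hl hs
    + ((p:ℝ)+1) * ((Nat.factorial hl : ℝ) * ((hs:ℝ)+1))⁻¹ * g (t+1) 1 p
    + ((t:ℝ)+1) * g (t+1) hl hs

theorem splits_ne_nil {l : List ℕ} (hl : l ≠ []) : ∀ P ∈ splits l, P ≠ [] := by
  cases l with
  | nil => exact absurd rfl hl
  | cons a m =>
    intro P hP
    rw [splits, List.mem_flatMap] at hP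
    obtain ⟨Q, _, hQ⟩ := hP
    cases Q with
    | nil => simp at hQ; simp [hQ]
    | cons b Q' =>
      simp at hQ
      rcases hQ with h | h <;> simp [h]

theorem CM_sum_map_flatMap {α β : Type*} (l : List α) (f : α → List β) (h : β → ℝ) :
    ((l.flatMap f).map h).sum = (l.map fun a => ((f a).map h).sum).sum := by
  induction l with
  | nil => simp
  | cons a l ih => simp [ih]

theorem Phig_cons (g : ℕ → ℕ → ℕ → ℝ) (a : ℕ) {m : List ℕ} (hm : m ≠ []) :
    Phig g (a :: m) = Phig (Dw a g) m := by
  unfold Phig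
  rw [splits, CM_sum_map_flatMap]
  congr 1
  apply List.map_congr_left
  intro P hP
  obtain ⟨b, P', rfl⟩ := List.exists_cons_of_ne_nil (splits_ne_nil hm P hP)
  simp [Dw, Aval]
  ring

theorem Phig_single (g : ℕ → ℕ → ℕ → ℝ) (b : ℕ) : Phig g [b] = g 0 1 b := by
  simp [Phig, splits, Aval]

theorem Phig_pair (g : ℕ → ℕ → ℕ → ℝ) (x y : ℕ) :
    Phig g [x, y] = g 1 1 x * ((y:ℝ)+1)⁻¹ + g 0 2 (x+y) := by
  simp [Phig, splits, Aval, Nat.factorial]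

theorem Phig_lin (c1 c3 : ℝ) (g1 g2 g3 : ℕ → ℕ → ℕ → ℝ) (l : List ℕ) :
    c1 * Phig g1 l + Phig g2 l + c3 * Phig g3 l
      = Phig (fun t hl hs => c1 * g1 t hl hs + g2 t hl hs + c3 * g3 t hl hs) l := by
  unfold Phig
  induction splits l with
  | nil => simp
  | cons x xs ih => simp only [List.map_cons, List.sum_cons]; rw [← ih]; ring

theorem Phig_congr {g1 g2 : ℕ → ℕ → ℕ → ℝ} (h : ∀ t hl hs, g1 t hl hs = g2 t hl hs)
    (l : List ℕ) : Phig g1 l = Phig g2 l := by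
  have : g1 = g2 := by funext t hl hs; exact h t hl hs
  rw [this]

theorem Phig_const_mul (c : ℝ) (g : ℕ → ℕ → ℕ → ℝ) (l : List ℕ) :
    Phig (fun t hl hs => c * g t hl hs) l = c * Phig g l := by
  unfold Phig
  induction splits l with
  | nil => simp
  | cons x xs ih => simp only [List.map_cons, List.sum_cons]; rw [ih]; ring

theorem CM_set_ne_nil {m : List ℕ} (hm : m ≠ []) (i x : ℕ) : m.set i x ≠ [] := by
  cases m with
  | nil => exact absurd rfl hm
  | cons c ms => cases i <;> simp

theorem CM_insertIdx_ne_nil {m : List ℕ} (hm : m ≠ []) (i x : ℕ) :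
    m.insertIdx i x ≠ [] := by
  cases m with
  | nil => exact absurd rfl hm
  | cons c ms => cases i <;> simp [List.insertIdx_succ_cons]

set_option maxHeartbeats 1000000 in
theorem CM_key (a p : ℕ) (S : ℝ) (g : ℕ → ℕ → ℕ → ℝ) (t hl hs : ℕ) :
    (a:ℝ) * Dw (a+p) g t hl hs + Ghat S p (Dw a g) t hl hs
      + ((p:ℝ)+1) * Dw a (Dw p g) t hl hs
    = Dw a (Ghat ((a:ℝ)+S) p g) t hl hs := by
  simp only [Dw, Ghat, Nat.factorial_succ, Nat.factorial_one]
  simp only [show a+p = p+a from by ring, show a+(hs+p) = p+(a+hs) from by ring,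
    show p+a+hs = p+(a+hs) from by ring, show a+hs+p = p+(a+hs) from by ring,
    show hs+p = p+hs from by ring, show a+(p+hs) = p+(a+hs) from by ring,
    show a+p+hs = p+(a+hs) from by ring, show Nat.factorial 0 = 1 from rfl]
  generalize g (t+1) 1 (p+a) = A1
  generalize g t (hl+1) (p+(a+hs)) = A2
  generalize g (t+1) 2 (p+a) = A3
  generalize g t (hl+1+1) (p+(a+hs)) = A4
  generalize g (t+1) 1 a = A5
  generalize g t (hl+1) (a+hs) = A6
  generalize g (t+2) 1 p = A7
  generalize g (t+1) 1 p = A8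
  generalize g (t+2) 1 a = A9
  generalize g (t+1) (hl+1) (a+hs) = A10
  have h1 : (Nat.factorial hl : ℝ) ≠ 0 := Nat.cast_ne_zero.2 (Nat.factorial_ne_zero hl)
  have h2 : ((hs:ℝ)+1) ≠ 0 := by positivity
  have h3 : ((hs:ℝ)+(p:ℝ)+1) ≠ 0 := by positivity
  have h5 : ((p:ℝ)+1) ≠ 0 := by positivity
  have h6 : ((hl:ℝ)+1) ≠ 0 := by positivity
  push_cast
  have hA5 : (hs:ℝ)*((Nat.factorial hl:ℝ)*((hs:ℝ)+(p:ℝ)+1))⁻¹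
      + ((p:ℝ)+1)*((hl:ℝ)+1)*((((hl:ℝ)+1)*(Nat.factorial hl:ℝ))*((hs:ℝ)+(p:ℝ)+1))⁻¹
      + (S-(hs:ℝ)+(t:ℝ))*((Nat.factorial hl:ℝ)*((hs:ℝ)+1))⁻¹
      = (S+(t:ℝ)+1)*((Nat.factorial hl:ℝ)*((hs:ℝ)+1))⁻¹ := by
    field_simp
    ring
  have hA9 : ((p:ℝ)+1)*((Nat.factorial hl:ℝ)*((hs:ℝ)+1))⁻¹*(1*((p:ℝ)+1))⁻¹
      + ((t:ℝ)+1)*((Nat.factorial hl:ℝ)*((hs:ℝ)+1))⁻¹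
      = ((t:ℝ)+2)*((Nat.factorial hl:ℝ)*((hs:ℝ)+1))⁻¹ := by
    field_simp
    ring
  linear_combination A5 * hA5 + A9 * hA9

set_option maxHeartbeats 1000000 in
theorem CM_Tmain (p : ℕ) : ∀ (l : List ℕ), l ≠ [] → ∀ g : ℕ → ℕ → ℕ → ℝ,
    (∑ i : Fin l.length, (l.get i : ℝ) * Phig g (l.set i (l.get i + p)))
      + ((p:ℝ)+1) * ∑ i ∈ Finset.range (l.length + 1), Phig g (l.insertIdx i p)
    = Phig (Ghat (l.sum : ℝ) p g) l := by
  intro l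
  induction l with
  | nil => intro h; exact absurd rfl h
  | cons a m IH =>
    intro _ g
    by_cases hm : m = []
    · subst hm
      have hp1 : ((p:ℝ)+1) ≠ 0 := by positivity
      have hmul : ((p:ℝ)+1) * ((p:ℝ)+1)⁻¹ = 1 := mul_inv_cancel₀ hp1
      simp only [List.length_cons, List.length_nil, Nat.reduceAdd]
      rw [Fin.sum_univ_one, Finset.sum_range_succ, Finset.sum_range_one]
      show (a:ℝ) * Phig g [a+p] + ((p:ℝ)+1) * (Phig g [p,a] + Phig g [a,p])
        = Phig (Ghat ((a:ℕ):ℝ) p g) [a]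
      rw [Phig_single, Phig_pair, Phig_pair, Phig_single]
      simp only [Ghat, Nat.factorial_one]
      push_cast
      simp only [show p+a = a+p from by ring]
      linear_combination g 1 1 a * hmul
    · simp only [List.length_cons]
      rw [Fin.sum_univ_succ, Finset.sum_range_succ']
      simp only [List.get_eq_getElem, Fin.val_succ, Fin.val_zero, List.getElem_cons_succ,
        List.getElem_cons_zero, List.set_cons_succ, List.set_cons_zero,
        List.insertIdx_succ_cons, List.insertIdx_zero]
      have hstep1 : ∑ i : Fin m.length,
          (m[(i:ℕ)] : ℝ) * Phig g (a :: m.set (i:ℕ) (m[(i:ℕ)] + p))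
          = ∑ i : Fin m.length, (m[(i:ℕ)] : ℝ) * Phig (Dw a g) (m.set (i:ℕ) (m[(i:ℕ)] + p)) := by
        apply Finset.sum_congr rfl
        intro i _
        rw [Phig_cons g a (CM_set_ne_nil hm _ _)]
      have hstep2 : ∑ i ∈ Finset.range (m.length + 1),
          Phig g (a :: m.insertIdx i p)
          = ∑ i ∈ Finset.range (m.length + 1), Phig (Dw a g) (m.insertIdx i p) := by
        apply Finset.sum_congr rfl
        intro i _
        rw [Phig_cons g a (CM_insertIdx_ne_nil hm _ _)]
      rw [hstep1, hstep2]
      rw [Phig_cons g (a+p) hm, Phig_cons g p (List.cons_ne_nil a m),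
        Phig_cons (Dw p g) a hm, Phig_cons (Ghat _ p g) a hm]
      have hIH := IH hm (Dw a g)
      simp only [List.get_eq_getElem] at hIH
      have hcomb : (a:ℝ) * Phig (Dw (a+p) g) m
          + Phig (Ghat ((m.sum:ℕ) : ℝ) p (Dw a g)) m
          + ((p:ℝ)+1) * Phig (Dw a (Dw p g)) m
          = Phig (Dw a (Ghat ((a:ℝ)+((m.sum:ℕ):ℝ)) p g)) m := by
        rw [Phig_lin]
        exact Phig_congr (fun t hl hs => CM_key a p ((m.sum:ℕ):ℝ) g t hl hs) m
      have hsum : ((a::m).sum : ℝ) = (a:ℝ) + ((m.sum:ℕ):ℝ) := by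
        simp [List.sum_cons]
      have hGeq : Phig (Dw a (Ghat (((a::m).sum:ℕ) : ℝ) p g)) m
          = Phig (Dw a (Ghat ((a:ℝ)+((m.sum:ℕ):ℝ)) p g)) m := by
        rw [show (((a::m).sum:ℕ) : ℝ) = (a:ℝ)+((m.sum:ℕ):ℝ) from hsum]
      rw [hGeq]
      linear_combination hIH + hcomb

noncomputable def CMgk (k : ℕ) : ℕ → ℕ → ℕ → ℝ :=
  fun t hl hs => (Nat.choose k (t+1) : ℝ) * ((Nat.factorial hl : ℝ) * ((hs:ℝ)+1))⁻¹

theorem CM_alphaval_eq_Phig (k : ℕ) {m : List ℕ} (hm : m ≠ []) :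
    alphaval k m = Phig (CMgk k) m := by
  unfold alphaval Phig
  congr 1
  apply List.map_congr_left
  intro L hL
  obtain ⟨B, L', rfl⟩ := List.exists_cons_of_ne_nil (splits_ne_nil hm L hL)
  simp [Aval, CMgk]
  ring

theorem CM_choose_cast (k t : ℕ) :
    ((t:ℝ)+2) * (Nat.choose k (t+2) : ℝ) = ((k:ℝ) - ((t:ℝ)+1)) * (Nat.choose k (t+1) : ℝ) := by
  rcases le_or_gt (t+1) k with h | h
  · have hnat := Nat.choose_succ_right_eq k (t+1)
    have hc := congrArg (fun n : ℕ => (n : ℝ)) hnat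
    push_cast [h] at hc
    linarith [hc]
  · rw [Nat.choose_eq_zero_of_lt h, Nat.choose_eq_zero_of_lt (by omega)]
    simp

set_option maxHeartbeats 1000000 in
theorem CM_claim2 (k p : ℕ) (S : ℝ) (t hl hs : ℕ) :
    Ghat S p (CMgk k) t hl hs = (S + (k:ℝ)) * CMgk k t hl hs := by
  simp only [Ghat, CMgk, Nat.factorial_succ, Nat.factorial_one, Nat.factorial_zero,
    show t+1+1 = t+2 from rfl]
  have h1 : (Nat.factorial hl : ℝ) ≠ 0 := Nat.cast_ne_zero.2 (Nat.factorial_ne_zero hl)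
  have h2 : ((hs:ℝ)+1) ≠ 0 := by positivity
  have h3 : ((hs:ℝ)+(p:ℝ)+1) ≠ 0 := by positivity
  have h5 : ((p:ℝ)+1) ≠ 0 := by positivity
  have h6 : ((hl:ℝ)+1) ≠ 0 := by positivity
  push_cast
  have hA5 : (hs:ℝ)*((Nat.factorial hl:ℝ)*((hs:ℝ)+(p:ℝ)+1))⁻¹
      + ((p:ℝ)+1)*((hl:ℝ)+1)*((((hl:ℝ)+1)*(Nat.factorial hl:ℝ))*((hs:ℝ)+(p:ℝ)+1))⁻¹
      + (S-(hs:ℝ)+(t:ℝ))*((Nat.factorial hl:ℝ)*((hs:ℝ)+1))⁻¹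
      = (S+(t:ℝ)+1)*((Nat.factorial hl:ℝ)*((hs:ℝ)+1))⁻¹ := by
    field_simp
    ring
  have hA9 : ((p:ℝ)+1)*((Nat.factorial hl:ℝ)*((hs:ℝ)+1))⁻¹*(1*((p:ℝ)+1))⁻¹
      + ((t:ℝ)+1)*((Nat.factorial hl:ℝ)*((hs:ℝ)+1))⁻¹
      = ((t:ℝ)+2)*((Nat.factorial hl:ℝ)*((hs:ℝ)+1))⁻¹ := by
    field_simp
    ring
  linear_combination (Nat.choose k (t+1) : ℝ) * hA5 + (Nat.choose k (t+2) : ℝ) * hA9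
    + ((Nat.factorial hl:ℝ)*((hs:ℝ)+1))⁻¹ * CM_choose_cast k t


/-- `V^{n₁,…,n_s}_{k,p₁} = (n₁+⋯+n_s+k) α^{n₁,…,n_s}_k`. -/
theorem stmt17 (l : List ℕ) (hne : l ≠ []) (hl : ∀ i ∈ l, 0 < i)
    (k p₁ : ℕ) (hk : 0 < k) (hp : 0 < p₁) :
    (∑ i : Fin l.length, (l.get i : ℝ) * alphaval k (l.set i (l.get i + p₁))) +
      ((p₁ : ℝ) + 1) * ∑ i ∈ Finset.range (l.length + 1), alphaval k (l.insertIdx i p₁)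
    = ((l.sum : ℝ) + (k : ℝ)) * alphaval k l := by
  have hset : ∑ i : Fin l.length, (l.get i : ℝ) * alphaval k (l.set i (l.get i + p₁))
      = ∑ i : Fin l.length, (l.get i : ℝ) * Phig (CMgk k) (l.set i (l.get i + p₁)) := by
    apply Finset.sum_congr rfl
    intro i _
    rw [CM_alphaval_eq_Phig k (CM_set_ne_nil hne _ _)]
  have hins : ∑ i ∈ Finset.range (l.length + 1), alphaval k (l.insertIdx i p₁)
      = ∑ i ∈ Finset.range (l.length + 1), Phig (CMgk k) (l.insertIdx i p₁) := by
    apply Finset.sum_congr rfl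
    intro i _
    rw [CM_alphaval_eq_Phig k (CM_insertIdx_ne_nil hne _ _)]
  rw [hset, hins, CM_alphaval_eq_Phig k hne, CM_Tmain p₁ l hne (CMgk k)]
  rw [Phig_congr (fun t hl hs => CM_claim2 k p₁ ((l.sum:ℕ):ℝ) t hl hs) l]
  rw [Phig_const_mul]
end
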